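/- Pre-Iwasawa factorization: let S = [[A, B],[C, D]] ∈ Sp(n) be written in n×n blocks. Then AAᵀ + BBᵀ is symmetric positive definite, and setting L = (AAᵀ + BBᵀ)^{−1/2}, Q = (CAᵀ + DBᵀ)(AAᵀ + BBᵀ)⁻¹, E = LA and F = LB, one has: Q is symmetric, L is symmetric positive definite, R = [[E, F],[−F, E]] belongs to Sp(n) ∩ O(2n, ℝ), and S = [[I, 0],[Q, I]] · [[L⁻¹, 0],[0, L]] · R. Moreover this factorization is unique: if S = [[I, 0],[Q′, I]] · [[L′⁻¹, 0],[0, L′]] · R′ with Q′ symmetric, L′ symmetric positive definite and R′ ∈ Sp(n) ∩ O(2n, ℝ), then Q′ = Q, L′ = L and R′ = R. -/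

import Mathlib

open Matrix ComplexOrder MeasureTheory

noncomputable section

/-- Phase space ℝ^{2n} ≃ ℝⁿ × ℝⁿ, with coordinates z = (x,p). -/
abbrev PS (n : ℕ) := Fin n ⊕ Fin n → ℝ

/-- The standard symplectic matrix J = [[0, I], [-I, 0]]. -/
def Jmat (n : ℕ) : Matrix (Fin n ⊕ Fin n) (Fin n ⊕ Fin n) ℝ :=
  Matrix.fromBlocks 0 1 (-1) 0

/-- The standard symplectic form ω(z,z′) = (Jz)·z′. -/
def symp (n : ℕ) (z z' : PS n) : ℝ := (Jmat n).mulVec z ⬝ᵥ z'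

/-- The symplectic group Sp(n) = {S : SᵀJS = J}. -/
def Sp (n : ℕ) : Set (Matrix (Fin n ⊕ Fin n) (Fin n ⊕ Fin n) ℝ) :=
  {S | Sᵀ * Jmat n * S = Jmat n}

set_option maxHeartbeats 1600000 in
/-- Pre-Iwasawa factorization of S = [[A,B],[C,D]] ∈ Sp(n): with
L = (AAᵀ + BBᵀ)^{-1/2} (the positive definite matrix with L·L = (AAᵀ+BBᵀ)⁻¹),
Q = (CAᵀ + DBᵀ)(AAᵀ + BBᵀ)⁻¹, E = LA, F = LB, one has Q symmetric,
R = [[E,F],[−F,E]] ∈ Sp(n) ∩ O(2n,ℝ) and S = [[I,0],[Q,I]]·[[L⁻¹,0],[0,L]]·R,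
and this factorization is unique. -/
theorem pre_iwasawa_factorization (n : ℕ) (A B C D : Matrix (Fin n) (Fin n) ℝ)
    (hS : Matrix.fromBlocks A B C D ∈ Sp n) :
    (A * Aᵀ + B * Bᵀ).PosDef ∧
    ∀ L : Matrix (Fin n) (Fin n) ℝ, L.PosDef → L * L = (A * Aᵀ + B * Bᵀ)⁻¹ →
      (((C * Aᵀ + D * Bᵀ) * (A * Aᵀ + B * Bᵀ)⁻¹).IsSymm ∧
       Matrix.fromBlocks (L * A) (L * B) (-(L * B)) (L * A) ∈ Sp n ∧
       (Matrix.fromBlocks (L * A) (L * B) (-(L * B)) (L * A))ᵀ *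
          Matrix.fromBlocks (L * A) (L * B) (-(L * B)) (L * A) = 1 ∧
       Matrix.fromBlocks A B C D =
         Matrix.fromBlocks 1 0 ((C * Aᵀ + D * Bᵀ) * (A * Aᵀ + B * Bᵀ)⁻¹) 1 *
           Matrix.fromBlocks L⁻¹ 0 0 L *
           Matrix.fromBlocks (L * A) (L * B) (-(L * B)) (L * A)) ∧
      (∀ Q' L' : Matrix (Fin n) (Fin n) ℝ,
        ∀ R' : Matrix (Fin n ⊕ Fin n) (Fin n ⊕ Fin n) ℝ,
        Q'.IsSymm → L'.PosDef → R' ∈ Sp n → R'ᵀ * R' = 1 →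
        Matrix.fromBlocks A B C D =
          Matrix.fromBlocks 1 0 Q' 1 * Matrix.fromBlocks L'⁻¹ 0 0 L' * R' →
        Q' = (C * Aᵀ + D * Bᵀ) * (A * Aᵀ + B * Bᵀ)⁻¹ ∧ L' = L ∧
          R' = Matrix.fromBlocks (L * A) (L * B) (-(L * B)) (L * A)) := by
  classical
  have hS' : (Matrix.fromBlocks A B C D)ᵀ * Jmat n * Matrix.fromBlocks A B C D = Jmat n := hS
  -- Block relations from SᵀJS = J
  have hblocks : Matrix.fromBlocks (Aᵀ*C - Cᵀ*A) (Aᵀ*D - Cᵀ*B) (Bᵀ*C - Dᵀ*A) (Bᵀ*D - Dᵀ*B)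
      = Matrix.fromBlocks 0 1 (-1) 0 := by
    have h := hS'
    simp only [Jmat, Matrix.fromBlocks_transpose, Matrix.fromBlocks_multiply] at h
    rw [← h, Matrix.fromBlocks_inj]
    refine ⟨?_, ?_, ?_, ?_⟩ <;> noncomm_ring
  rw [Matrix.fromBlocks_inj] at hblocks
  obtain ⟨e1, e2, _, e4⟩ := hblocks
  have h1 : Aᵀ*C = Cᵀ*A := by linear_combination (norm := noncomm_ring) e1
  have h2 : Aᵀ*D = 1 + Cᵀ*B := by linear_combination (norm := noncomm_ring) e2
  have h4 : Bᵀ*D = Dᵀ*B := by linear_combination (norm := noncomm_ring) e4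
  have h7 : Dᵀ*A = 1 + Bᵀ*C := by
    have := congrArg Matrix.transpose h2
    simpa [Matrix.transpose_mul, Matrix.transpose_add] using this
  -- S J Sᵀ = J
  have hJJ : Jmat n * Jmat n = -1 := by
    have h : Jmat n * Jmat n = Matrix.fromBlocks (-1) 0 0 (-1) := by
      simp [Jmat, Matrix.fromBlocks_multiply]
    rw [h]
    calc Matrix.fromBlocks (-1) 0 0 (-1)
        = Matrix.fromBlocks (-(1 : Matrix (Fin n) (Fin n) ℝ)) (-0) (-0) (-1) := by
          rw [neg_zero]
      _ = -(Matrix.fromBlocks 1 0 0 1) := (Matrix.fromBlocks_neg _ _ _ _).symm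
      _ = -1 := by rw [Matrix.fromBlocks_one]
  have hSl : (-(Jmat n) * (Matrix.fromBlocks A B C D)ᵀ * Jmat n) * Matrix.fromBlocks A B C D
      = 1 := by
    linear_combination (norm := noncomm_ring) (-(Jmat n)) * hS' - hJJ
  have hSr := mul_eq_one_comm.mp hSl
  have hS2 : Matrix.fromBlocks A B C D * Jmat n * (Matrix.fromBlocks A B C D)ᵀ = Jmat n := by
    linear_combination (norm := noncomm_ring)
      (Matrix.fromBlocks A B C D * Jmat n * (Matrix.fromBlocks A B C D)ᵀ) * hJJ
        - hSr * (-(Jmat n))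
  have hblocks2 : Matrix.fromBlocks (A*Bᵀ - B*Aᵀ) (A*Dᵀ - B*Cᵀ) (C*Bᵀ - D*Aᵀ) (C*Dᵀ - D*Cᵀ)
      = Matrix.fromBlocks 0 1 (-1) 0 := by
    have h := hS2
    simp only [Jmat, Matrix.fromBlocks_transpose, Matrix.fromBlocks_multiply] at h
    rw [← h, Matrix.fromBlocks_inj]
    refine ⟨?_, ?_, ?_, ?_⟩ <;> noncomm_ring
  rw [Matrix.fromBlocks_inj] at hblocks2
  obtain ⟨f1, _, f3, _⟩ := hblocks2
  have g1 : A*Bᵀ = B*Aᵀ := by linear_combination (norm := noncomm_ring) f1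
  have g3 : D*Aᵀ = 1 + C*Bᵀ := by linear_combination (norm := noncomm_ring) - f3
  -- Positive definiteness of P = AAᵀ + BBᵀ
  have hP : (A * Aᵀ + B * Bᵀ).PosDef := by
    refine Matrix.PosDef.of_dotProduct_mulVec_pos ?_ ?_
    · rw [Matrix.IsHermitian, Matrix.conjTranspose_eq_transpose_of_trivial]
      simp [Matrix.transpose_add, Matrix.transpose_mul]
    · intro x hx
      have hrw : star x ⬝ᵥ ((A*Aᵀ + B*Bᵀ) *ᵥ x)
          = (Aᵀ *ᵥ x) ⬝ᵥ (Aᵀ *ᵥ x) + (Bᵀ *ᵥ x) ⬝ᵥ (Bᵀ *ᵥ x) := by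
        simp only [star_trivial, Matrix.add_mulVec, dotProduct_add,
          ← Matrix.mulVec_mulVec, dotProduct_mulVec, Matrix.vecMul_transpose,
          ← Matrix.mulVec_transpose]
      rw [hrw]
      have n1 : 0 ≤ (Aᵀ *ᵥ x) ⬝ᵥ (Aᵀ *ᵥ x) := Finset.sum_nonneg fun _ _ => mul_self_nonneg _
      have n2 : 0 ≤ (Bᵀ *ᵥ x) ⬝ᵥ (Bᵀ *ᵥ x) := Finset.sum_nonneg fun _ _ => mul_self_nonneg _
      by_contra hle
      push_neg at hle
      have hz1 : (Aᵀ *ᵥ x) ⬝ᵥ (Aᵀ *ᵥ x) = 0 := le_antisymm (by linarith) n1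
      have hz2 : (Bᵀ *ᵥ x) ⬝ᵥ (Bᵀ *ᵥ x) = 0 := le_antisymm (by linarith) n2
      rw [dotProduct_self_eq_zero] at hz1 hz2
      apply hx
      have hone : D*Aᵀ - C*Bᵀ = 1 := by linear_combination (norm := noncomm_ring) g3
      calc x = (D*Aᵀ - C*Bᵀ) *ᵥ x := by rw [hone, Matrix.one_mulVec]
        _ = D *ᵥ (Aᵀ *ᵥ x) - C *ᵥ (Bᵀ *ᵥ x) := by
            rw [Matrix.sub_mulVec, Matrix.mulVec_mulVec, Matrix.mulVec_mulVec]
        _ = 0 := by rw [hz1, hz2]; simp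
  have hPdet : IsUnit (A * Aᵀ + B * Bᵀ).det := (Matrix.isUnit_iff_isUnit_det _).mp hP.isUnit
  refine ⟨hP, fun L hLpd hLsq => ?_⟩
  have hLt : Lᵀ = L := by
    have := hLpd.1
    rwa [Matrix.IsHermitian, Matrix.conjTranspose_eq_transpose_of_trivial] at this
  have hLdet : IsUnit L.det := (Matrix.isUnit_iff_isUnit_det _).mp hLpd.isUnit
  have hPinv : (A*Aᵀ+B*Bᵀ) * (A*Aᵀ+B*Bᵀ)⁻¹ = 1 := Matrix.mul_nonsing_inv _ hPdet
  have hPinv' : (A*Aᵀ+B*Bᵀ)⁻¹ * (A*Aᵀ+B*Bᵀ) = 1 := Matrix.nonsing_inv_mul _ hPdet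
  have hLinv : L * L⁻¹ = 1 := Matrix.mul_nonsing_inv _ hLdet
  have hLinv' : L⁻¹ * L = 1 := Matrix.nonsing_inv_mul _ hLdet
  have hPLL : A*Aᵀ+B*Bᵀ = L⁻¹ * L⁻¹ := by
    rw [← Matrix.mul_inv_rev, hLsq, Matrix.nonsing_inv_nonsing_inv _ hPdet]
  have hLPL : L * (A*Aᵀ+B*Bᵀ) * L = 1 := by
    rw [hPLL]
    linear_combination (norm := noncomm_ring) hLinv * (L⁻¹*L) + hLinv'
  have hPt : (A*Aᵀ+B*Bᵀ)ᵀ = A*Aᵀ+B*Bᵀ := by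
    simp [Matrix.transpose_add, Matrix.transpose_mul]
  -- Q symmetric
  have hPX : (A*Aᵀ+B*Bᵀ) * (C*Aᵀ + D*Bᵀ) = (A*Cᵀ + B*Dᵀ) * (A*Aᵀ+B*Bᵀ) := by
    linear_combination (norm := noncomm_ring)
      A * h1 * Aᵀ + A * h2 * Bᵀ + B * h4 * Bᵀ - B * h7 * Aᵀ + g1
  have hQs : (A*Aᵀ+B*Bᵀ)⁻¹ * (A*Cᵀ + B*Dᵀ) = (C*Aᵀ + D*Bᵀ) * (A*Aᵀ+B*Bᵀ)⁻¹ := by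
    linear_combination (norm := noncomm_ring)
      - ((A*Aᵀ+B*Bᵀ)⁻¹ * hPX * (A*Aᵀ+B*Bᵀ)⁻¹) + hPinv' * ((C*Aᵀ + D*Bᵀ) * (A*Aᵀ+B*Bᵀ)⁻¹)
        - (A*Aᵀ+B*Bᵀ)⁻¹ * ((A*Cᵀ + B*Dᵀ) * hPinv)
  have hQsymm : ((C * Aᵀ + D * Bᵀ) * (A * Aᵀ + B * Bᵀ)⁻¹).IsSymm := by
    rw [Matrix.IsSymm, Matrix.transpose_mul, Matrix.transpose_nonsing_inv, hPt]
    have ht : (C*Aᵀ + D*Bᵀ)ᵀ = A*Cᵀ + B*Dᵀ := by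
      simp [Matrix.transpose_add, Matrix.transpose_mul]
    rw [ht, hQs]
  -- R orthogonal
  have hRt : (Matrix.fromBlocks (L*A) (L*B) (-(L*B)) (L*A))ᵀ
      = Matrix.fromBlocks (Aᵀ*L) (-(Bᵀ*L)) (Bᵀ*L) (Aᵀ*L) := by
    simp [Matrix.fromBlocks_transpose, Matrix.transpose_mul, hLt, Matrix.transpose_neg]
  have hRRt : Matrix.fromBlocks (L*A) (L*B) (-(L*B)) (L*A)
      * (Matrix.fromBlocks (L*A) (L*B) (-(L*B)) (L*A))ᵀ = 1 := by
    rw [hRt, Matrix.fromBlocks_multiply, ← Matrix.fromBlocks_one, Matrix.fromBlocks_inj]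
    refine ⟨?_, ?_, ?_, ?_⟩
    · linear_combination (norm := noncomm_ring) hLPL
    · linear_combination (norm := noncomm_ring) - (L * g1 * L)
    · linear_combination (norm := noncomm_ring) L * g1 * L
    · linear_combination (norm := noncomm_ring) hLPL
  have hRtR := mul_eq_one_comm.mp hRRt
  have hJR : Jmat n * Matrix.fromBlocks (L*A) (L*B) (-(L*B)) (L*A)
      = Matrix.fromBlocks (L*A) (L*B) (-(L*B)) (L*A) * Jmat n := by
    simp only [Jmat, Matrix.fromBlocks_multiply]
    rw [Matrix.fromBlocks_inj]
    refine ⟨?_, ?_, ?_, ?_⟩ <;> noncomm_ring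
  have hRSp : Matrix.fromBlocks (L*A) (L*B) (-(L*B)) (L*A) ∈ Sp n := by
    show _ * _ * _ = _
    rw [mul_assoc, hJR, ← mul_assoc, hRtR, one_mul]
  -- factorization
  have hXA : (A*Cᵀ+B*Dᵀ)*A - B = (A*Aᵀ+B*Bᵀ)*C := by
    linear_combination (norm := noncomm_ring) B*h7 - A*h1
  have hXB : (A*Cᵀ+B*Dᵀ)*B + A = (A*Aᵀ+B*Bᵀ)*D := by
    linear_combination (norm := noncomm_ring) - (A*h2) - B*h4
  have hfact : Matrix.fromBlocks A B C D =
      Matrix.fromBlocks 1 0 ((C * Aᵀ + D * Bᵀ) * (A * Aᵀ + B * Bᵀ)⁻¹) 1 *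
        Matrix.fromBlocks L⁻¹ 0 0 L *
        Matrix.fromBlocks (L * A) (L * B) (-(L * B)) (L * A) := by
    rw [Matrix.fromBlocks_multiply, Matrix.fromBlocks_multiply, Matrix.fromBlocks_inj]
    refine ⟨?_, ?_, ?_, ?_⟩
    · linear_combination (norm := noncomm_ring) - (hLinv' * A)
    · linear_combination (norm := noncomm_ring) - (hLinv' * B)
    · linear_combination (norm := noncomm_ring)
        - ((C*Aᵀ+D*Bᵀ) * (A*Aᵀ+B*Bᵀ)⁻¹ * hLinv' * A) + hLsq * B + hQs * A
          - (A*Aᵀ+B*Bᵀ)⁻¹ * hXA - hPinv' * C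
    · linear_combination (norm := noncomm_ring)
        - ((C*Aᵀ+D*Bᵀ) * (A*Aᵀ+B*Bᵀ)⁻¹ * hLinv' * B) - hLsq * A + hQs * B
          - (A*Aᵀ+B*Bᵀ)⁻¹ * hXB - hPinv' * D
  refine ⟨⟨hQsymm, hRSp, hRtR, hfact⟩, ?_⟩
  -- uniqueness
  intro Q' L' R' hQ's hL'pd _ hR'O heq
  have hL't : L'ᵀ = L' := by
    have := hL'pd.1
    rwa [Matrix.IsHermitian, Matrix.conjTranspose_eq_transpose_of_trivial] at this
  have hL'det : IsUnit L'.det := (Matrix.isUnit_iff_isUnit_det _).mp hL'pd.isUnit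
  have hR'Rt : R' * R'ᵀ = 1 := mul_eq_one_comm.mp hR'O
  have hM' : Matrix.fromBlocks 1 0 Q' 1 * Matrix.fromBlocks L'⁻¹ 0 0 L'
      = Matrix.fromBlocks L'⁻¹ 0 (Q'*L'⁻¹) L' := by
    rw [Matrix.fromBlocks_multiply, Matrix.fromBlocks_inj]
    refine ⟨?_, ?_, ?_, ?_⟩ <;> noncomm_ring
  rw [hM'] at heq
  have hM't : (Matrix.fromBlocks L'⁻¹ 0 (Q'*L'⁻¹) L')ᵀ
      = Matrix.fromBlocks L'⁻¹ (L'⁻¹*Q') 0 L' := by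
    rw [Matrix.fromBlocks_transpose, Matrix.transpose_mul, Matrix.transpose_nonsing_inv,
      hL't, hQ's.eq, Matrix.transpose_zero]
  have hSSt : Matrix.fromBlocks A B C D * (Matrix.fromBlocks A B C D)ᵀ
      = Matrix.fromBlocks L'⁻¹ 0 (Q'*L'⁻¹) L'
        * (Matrix.fromBlocks L'⁻¹ 0 (Q'*L'⁻¹) L')ᵀ := by
    rw [heq, Matrix.transpose_mul,
      mul_assoc (Matrix.fromBlocks L'⁻¹ 0 (Q'*L'⁻¹) L') R', ← mul_assoc R' R'ᵀ, hR'Rt, one_mul]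
  rw [hM't, Matrix.fromBlocks_transpose, Matrix.fromBlocks_multiply,
    Matrix.fromBlocks_multiply, Matrix.fromBlocks_inj] at hSSt
  obtain ⟨u11, _, u21, _⟩ := hSSt
  have u11' : A*Aᵀ+B*Bᵀ = L'⁻¹*L'⁻¹ := by linear_combination (norm := noncomm_ring) u11
  have u21' : C*Aᵀ+D*Bᵀ = Q'*L'⁻¹*L'⁻¹ := by linear_combination (norm := noncomm_ring) u21
  have hsq : (L'*L')⁻¹ = A*Aᵀ+B*Bᵀ := by rw [Matrix.mul_inv_rev, ← u11']
  have hL'sq : L'*L' = (A*Aᵀ+B*Bᵀ)⁻¹ := by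
    rw [← hsq, Matrix.nonsing_inv_nonsing_inv]
    rw [Matrix.det_mul]
    exact hL'det.mul hL'det
  have hLL' : L' = L := by
    open scoped MatrixOrder in
    calc L' = CFC.sqrt (L'*L') := (CFC.sqrt_mul_self L' hL'pd.posSemidef.nonneg).symm
      _ = CFC.sqrt (L*L) := by rw [hL'sq, hLsq]
      _ = L := CFC.sqrt_mul_self L hLpd.posSemidef.nonneg
  have hQ'eq : Q' = (C * Aᵀ + D * Bᵀ) * (A * Aᵀ + B * Bᵀ)⁻¹ := by
    linear_combination (norm := noncomm_ring)
      - (u21' * (A*Aᵀ+B*Bᵀ)⁻¹) + Q' * u11' * (A*Aᵀ+B*Bᵀ)⁻¹ - Q' * hPinv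
  refine ⟨hQ'eq, hLL', ?_⟩
  rw [hQ'eq, hLL'] at heq
  have hMfact : Matrix.fromBlocks A B C D
      = Matrix.fromBlocks L⁻¹ 0 ((C*Aᵀ+D*Bᵀ)*(A*Aᵀ+B*Bᵀ)⁻¹*L⁻¹) L *
        Matrix.fromBlocks (L*A) (L*B) (-(L*B)) (L*A) := by
    rw [hfact]
    congr 1
    rw [Matrix.fromBlocks_multiply, Matrix.fromBlocks_inj]
    refine ⟨?_, ?_, ?_, ?_⟩ <;> noncomm_ring
  have hMdet : IsUnit (Matrix.fromBlocks L⁻¹ 0 ((C*Aᵀ+D*Bᵀ)*(A*Aᵀ+B*Bᵀ)⁻¹*L⁻¹) L).det := by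
    rw [Matrix.det_fromBlocks_zero₁₂]
    exact ((Matrix.isUnit_iff_isUnit_det _).mp hLpd.inv.isUnit).mul hLdet
  have hcancel : Matrix.fromBlocks L⁻¹ 0 ((C*Aᵀ+D*Bᵀ)*(A*Aᵀ+B*Bᵀ)⁻¹*L⁻¹) L * R'
      = Matrix.fromBlocks L⁻¹ 0 ((C*Aᵀ+D*Bᵀ)*(A*Aᵀ+B*Bᵀ)⁻¹*L⁻¹) L *
        Matrix.fromBlocks (L*A) (L*B) (-(L*B)) (L*A) := by
    rw [← heq, ← hMfact]
  have := congrArg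
    (fun X => (Matrix.fromBlocks L⁻¹ 0 ((C*Aᵀ+D*Bᵀ)*(A*Aᵀ+B*Bᵀ)⁻¹*L⁻¹) L)⁻¹ * X) hcancel
  simpa [← mul_assoc, Matrix.nonsing_inv_mul _ hMdet, one_mul] using this
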